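/- For all integers a, b with a + b ≥ 0, the identity Σ_{c≥0} [a+b choose c, a+c, b−2c]_{λ²} · λ^{2c(a+c)} · (−λ; λ)_{b−2c} = [2(a+b) choose b]_λ holds in ℚ(λ); here the sum is finite since the multinomial vanishes unless c ≥ 0, a+c ≥ 0 and b−2c ≥ 0. -/

import Mathlib

noncomputable section

/-- The field `ℚ(λ)` of rational functions. -/
abbrev K : Type := RatFunc ℚ

/-- The indeterminate `λ`. -/
def Xq : K := RatFunc.X

/-- `(n)_t = ∏_{i=1}^n (t^i − 1)`. -/
def qfact (t : K) (n : ℕ) : K := ∏ i ∈ Finset.range n, (t ^ (i + 1) - 1)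

/-- `(x; y)_n = ∏_{i=1}^n (1 − x·y^{i−1})`. -/
def qpoch (x y : K) (n : ℕ) : K := ∏ i ∈ Finset.range n, (1 - x * y ^ i)

/-- The Gaussian binomial `[n choose m]_t` (with value `0` out of range). -/
def qbinomN (t : K) (n m : ℕ) : K :=
  if m ≤ n then qfact t n / (qfact t m * qfact t (n - m)) else 0

/-- The `t`-multinomial `[m₁+m₂+m₃ choose m₁, m₂, m₃]_t`. -/
def qmul3 (t : K) (m1 m2 m3 : ℕ) : K :=
  qfact t (m1 + m2 + m3) / (qfact t m1 * qfact t m2 * qfact t m3)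

/-- The Gaussian binomial `[n choose m]_t` for integer arguments
(with value `0` if `m < 0`, `m > n`, or `n < 0`). -/
def qbinomZ (t : K) (n m : ℤ) : K :=
  if 0 ≤ m ∧ m ≤ n then qfact t n.toNat / (qfact t m.toNat * qfact t (n - m).toNat) else 0

/-- The `t`-multinomial `[m₁+m₂+m₃ choose m₁, m₂, m₃]_t` for integer arguments
(with value `0` unless all `mᵢ ≥ 0`). -/
def qmul3Z (t : K) (m1 m2 m3 : ℤ) : K :=
  if 0 ≤ m1 ∧ 0 ≤ m2 ∧ 0 ≤ m3 then
    qfact t (m1 + m2 + m3).toNat / (qfact t m1.toNat * qfact t m2.toNat * qfact t m3.toNat)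
  else 0

lemma Xq_ne_zero : (Xq : K) ≠ 0 := by
  simpa [Xq] using RatFunc.X_ne_zero (K := ℚ)

lemma Xq_pow_sub_one_ne (k : ℕ) (hk : k ≠ 0) : (Xq ^ k - 1 : K) ≠ 0 := by
  have : (Xq ^ k - 1 : K) = algebraMap (Polynomial ℚ) K (Polynomial.X ^ k - 1) := by
    simp [Xq, RatFunc.algebraMap_X]
  rw [this, map_ne_zero_iff _ (IsFractionRing.injective (Polynomial ℚ) K)]
  intro h
  have := congrArg (Polynomial.eval 0) h
  simp [zero_pow hk] at this

lemma t_pow_sub_one_ne (k : ℕ) (hk : k ≠ 0) : ((Xq ^ 2) ^ k - 1 : K) ≠ 0 := by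
  rw [← pow_mul]; exact Xq_pow_sub_one_ne _ (by omega)

lemma qfact_t_ne_zero (n : ℕ) : qfact (Xq ^ 2) n ≠ 0 := by
  unfold qfact
  exact Finset.prod_ne_zero_iff.2 fun i _ => t_pow_sub_one_ne _ (by omega)

lemma qfact_X_ne_zero (n : ℕ) : qfact Xq n ≠ 0 := by
  unfold qfact
  exact Finset.prod_ne_zero_iff.2 fun i _ => Xq_pow_sub_one_ne _ (by omega)

lemma qfact_succ (t : K) (n : ℕ) : qfact t (n+1) = qfact t n * (t ^ (n+1) - 1) :=
  Finset.prod_range_succ _ _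
lemma qpoch_succ (x y : K) (n : ℕ) : qpoch x y (n+1) = qpoch x y n * (1 - x * y ^ n) :=
  Finset.prod_range_succ _ _
lemma qfact_zero (t : K) : qfact t 0 = 1 := rfl
lemma qpoch_zero (x y : K) : qpoch x y 0 = 1 := rfl

/-- The basic summand in natural-number coordinates. -/
def W (c j m : ℕ) : K :=
  qfact (Xq^2) (c+j+m) / (qfact (Xq^2) c * qfact (Xq^2) j * qfact (Xq^2) m)
    * Xq^(2*c*j) * qpoch (-Xq) Xq m

lemma W_div (c j m : ℕ) :
    W c j m = (qfact (Xq^2) (c+j+m) * Xq^(2*c*j) * qpoch (-Xq) Xq m)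
      / (qfact (Xq^2) c * qfact (Xq^2) j * qfact (Xq^2) m) := by
  unfold W; rw [div_mul_eq_mul_div, div_mul_eq_mul_div]

lemma qfact3_ne (x y z : ℕ) :
    (qfact (Xq^2) x * qfact (Xq^2) y * qfact (Xq^2) z : K) ≠ 0 :=
  mul_ne_zero (mul_ne_zero (qfact_t_ne_zero _) (qfact_t_ne_zero _)) (qfact_t_ne_zero _)

/-- Exchange relation. -/
lemma WE (c j m : ℕ) :
    (Xq^(2*j+m+1) - Xq^(2*j)) * W c j (m+1) = ((Xq^2)^(c+1) - 1) * W (c+1) j m := by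
  rw [W_div, W_div, show c+j+(m+1) = c+j+m+1 from by omega,
    show c+1+j+m = c+j+m+1 from by omega, mul_div_assoc', mul_div_assoc',
    div_eq_div_iff (qfact3_ne _ _ _) (qfact3_ne _ _ _)]
  simp only [qfact_succ, qpoch_succ]
  ring


lemma W_x00 (x : ℕ) : W x 0 0 = 1 := by
  unfold W
  simp [qfact_zero, qpoch_zero, div_self (qfact_t_ne_zero x)]

lemma W_0ym (y m : ℕ) : W 0 y m = qfact (Xq^2) (y+m) / (qfact (Xq^2) y * qfact (Xq^2) m)
    * qpoch (-Xq) Xq m := by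
  unfold W
  simp [qfact_zero]

-- Pascal, case (c+1, j+1, m+1)
lemma WP_A (c j m : ℕ) :
    W (c+1) (j+1) (m+1) = Xq^(2*(c+1)) * W (c+1) j (m+1)
      + Xq^(2*(j+1)) * (1 + Xq^(m+1)) * W (c+1) (j+1) m
      + Xq^(4*(j+1)+2*(m+1)) * W c (j+1) (m+1) := by
  have e0 : W (c+1) (j+1) (m+1)
      = (qfact (Xq^2) (c+j+m+3) * Xq^(2*(c+1)*(j+1)) * qpoch (-Xq) Xq (m+1))
        / (qfact (Xq^2) (c+1) * qfact (Xq^2) (j+1) * qfact (Xq^2) (m+1)) := by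
    rw [W_div, show c+1+(j+1)+(m+1) = c+j+m+3 from by omega]
  have e1 : Xq^(2*(c+1)) * W (c+1) j (m+1)
      = (Xq^(2*(c+1)) * qfact (Xq^2) (c+j+m+2) * Xq^(2*(c+1)*j) * qpoch (-Xq) Xq (m+1)
          * ((Xq^2)^(j+1)-1))
        / (qfact (Xq^2) (c+1) * qfact (Xq^2) (j+1) * qfact (Xq^2) (m+1)) := by
    rw [W_div, show c+1+j+(m+1) = c+j+m+2 from by omega, mul_div_assoc',
      div_eq_div_iff (qfact3_ne _ _ _) (qfact3_ne _ _ _)]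
    simp only [qfact_succ]
    ring
  have e2 : Xq^(2*(j+1)) * (1 + Xq^(m+1)) * W (c+1) (j+1) m
      = (Xq^(2*(j+1)) * (1 + Xq^(m+1)) * qfact (Xq^2) (c+j+m+2) * Xq^(2*(c+1)*(j+1))
          * qpoch (-Xq) Xq m * ((Xq^2)^(m+1)-1))
        / (qfact (Xq^2) (c+1) * qfact (Xq^2) (j+1) * qfact (Xq^2) (m+1)) := by
    rw [W_div, show c+1+(j+1)+m = c+j+m+2 from by omega, mul_div_assoc',
      div_eq_div_iff (qfact3_ne _ _ _) (qfact3_ne _ _ _)]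
    simp only [qfact_succ]
    ring
  have e3 : Xq^(4*(j+1)+2*(m+1)) * W c (j+1) (m+1)
      = (Xq^(4*(j+1)+2*(m+1)) * qfact (Xq^2) (c+j+m+2) * Xq^(2*c*(j+1))
          * qpoch (-Xq) Xq (m+1) * ((Xq^2)^(c+1)-1))
        / (qfact (Xq^2) (c+1) * qfact (Xq^2) (j+1) * qfact (Xq^2) (m+1)) := by
    rw [W_div, show c+(j+1)+(m+1) = c+j+m+2 from by omega, mul_div_assoc',
      div_eq_div_iff (qfact3_ne _ _ _) (qfact3_ne _ _ _)]
    simp only [qfact_succ]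
    ring
  rw [e0, e1, e2, e3, ← add_div, ← add_div]
  congr 1
  rw [show c+j+m+3 = (c+j+m+2)+1 from rfl, qfact_succ, qpoch_succ]
  ring

-- Pascal, case (0, j+1, m+1)
lemma WP_B (j m : ℕ) :
    W 0 (j+1) (m+1) = W 0 j (m+1)
      + Xq^(2*(j+1)) * (1 + Xq^(m+1)) * W 0 (j+1) m := by
  have e0 : W 0 (j+1) (m+1)
      = (qfact (Xq^2) (j+m+2) * qpoch (-Xq) Xq (m+1))
        / (qfact (Xq^2) (j+1) * qfact (Xq^2) (m+1)) := by
    rw [W_0ym, show j+1+(m+1) = j+m+2 from by omega, div_mul_eq_mul_div]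
  have e1 : W 0 j (m+1)
      = (qfact (Xq^2) (j+m+1) * qpoch (-Xq) Xq (m+1) * ((Xq^2)^(j+1)-1))
        / (qfact (Xq^2) (j+1) * qfact (Xq^2) (m+1)) := by
    rw [W_0ym, show j+(m+1) = j+m+1 from by omega, div_mul_eq_mul_div,
      div_eq_div_iff (mul_ne_zero (qfact_t_ne_zero _) (qfact_t_ne_zero _))
        (mul_ne_zero (qfact_t_ne_zero _) (qfact_t_ne_zero _))]
    simp only [qfact_succ]
    ring
  have e2 : Xq^(2*(j+1)) * (1 + Xq^(m+1)) * W 0 (j+1) m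
      = (Xq^(2*(j+1)) * (1 + Xq^(m+1)) * qfact (Xq^2) (j+m+1) * qpoch (-Xq) Xq m
          * ((Xq^2)^(m+1)-1))
        / (qfact (Xq^2) (j+1) * qfact (Xq^2) (m+1)) := by
    rw [W_0ym, show j+1+m = j+m+1 from by omega, div_mul_eq_mul_div, mul_div_assoc',
      div_eq_div_iff (mul_ne_zero (qfact_t_ne_zero _) (qfact_t_ne_zero _))
        (mul_ne_zero (qfact_t_ne_zero _) (qfact_t_ne_zero _))]
    simp only [qfact_succ]
    ring
  rw [e0, e1, e2, ← add_div]
  congr 1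
  rw [show j+m+2 = (j+m+1)+1 from rfl, qfact_succ, qpoch_succ]
  ring

-- Pascal, case (c+1, 0, m+1)
lemma WP_C (c m : ℕ) :
    W (c+1) 0 (m+1) = (1 + Xq^(m+1)) * W (c+1) 0 m
      + Xq^(2*(m+1)) * W c 0 (m+1) := by
  have e0 : W (c+1) 0 (m+1)
      = (qfact (Xq^2) (c+m+2) * Xq^(2*(c+1)*0) * qpoch (-Xq) Xq (m+1))
        / (qfact (Xq^2) (c+1) * qfact (Xq^2) 0 * qfact (Xq^2) (m+1)) := by
    rw [W_div, show c+1+0+(m+1) = c+m+2 from by omega]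
  have e1 : (1 + Xq^(m+1)) * W (c+1) 0 m
      = ((1 + Xq^(m+1)) * qfact (Xq^2) (c+m+1) * Xq^(2*(c+1)*0) * qpoch (-Xq) Xq m
          * ((Xq^2)^(m+1)-1))
        / (qfact (Xq^2) (c+1) * qfact (Xq^2) 0 * qfact (Xq^2) (m+1)) := by
    rw [W_div, show c+1+0+m = c+m+1 from by omega, mul_div_assoc',
      div_eq_div_iff (qfact3_ne _ _ _) (qfact3_ne _ _ _)]
    simp only [qfact_succ]
    ring
  have e2 : Xq^(2*(m+1)) * W c 0 (m+1)
      = (Xq^(2*(m+1)) * qfact (Xq^2) (c+m+1) * Xq^(2*c*0) * qpoch (-Xq) Xq (m+1)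
          * ((Xq^2)^(c+1)-1))
        / (qfact (Xq^2) (c+1) * qfact (Xq^2) 0 * qfact (Xq^2) (m+1)) := by
    rw [W_div, show c+0+(m+1) = c+m+1 from by omega, mul_div_assoc',
      div_eq_div_iff (qfact3_ne _ _ _) (qfact3_ne _ _ _)]
    simp only [qfact_succ]
    ring
  rw [e0, e1, e2, ← add_div]
  congr 1
  rw [show c+m+2 = (c+m+1)+1 from rfl, qfact_succ, qpoch_succ]
  ring

-- Pascal, case (c+1, j+1, 0)
lemma WP_D (c j : ℕ) :
    W (c+1) (j+1) 0 = Xq^(2*(c+1)) * W (c+1) j 0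
      + Xq^(4*(j+1)) * W c (j+1) 0 := by
  have e0 : W (c+1) (j+1) 0
      = (qfact (Xq^2) (c+j+2) * Xq^(2*(c+1)*(j+1)) * qpoch (-Xq) Xq 0)
        / (qfact (Xq^2) (c+1) * qfact (Xq^2) (j+1) * qfact (Xq^2) 0) := by
    rw [W_div, show c+1+(j+1)+0 = c+j+2 from by omega]
  have e1 : Xq^(2*(c+1)) * W (c+1) j 0
      = (Xq^(2*(c+1)) * qfact (Xq^2) (c+j+1) * Xq^(2*(c+1)*j) * qpoch (-Xq) Xq 0
          * ((Xq^2)^(j+1)-1))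
        / (qfact (Xq^2) (c+1) * qfact (Xq^2) (j+1) * qfact (Xq^2) 0) := by
    rw [W_div, show c+1+j+0 = c+j+1 from by omega, mul_div_assoc',
      div_eq_div_iff (qfact3_ne _ _ _) (qfact3_ne _ _ _)]
    simp only [qfact_succ]
    ring
  have e2 : Xq^(4*(j+1)) * W c (j+1) 0
      = (Xq^(4*(j+1)) * qfact (Xq^2) (c+j+1) * Xq^(2*c*(j+1)) * qpoch (-Xq) Xq 0
          * ((Xq^2)^(c+1)-1))
        / (qfact (Xq^2) (c+1) * qfact (Xq^2) (j+1) * qfact (Xq^2) 0) := by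
    rw [W_div, show c+(j+1)+0 = c+j+1 from by omega, mul_div_assoc',
      div_eq_div_iff (qfact3_ne _ _ _) (qfact3_ne _ _ _)]
    simp only [qfact_succ]
    ring
  rw [e0, e1, e2, ← add_div]
  congr 1
  rw [show c+j+2 = (c+j+1)+1 from rfl, qfact_succ]
  ring

-- Pascal, case (0, 0, m+1)
lemma WP_E (m : ℕ) : W 0 0 (m+1) = (1 + Xq^(m+1)) * W 0 0 m := by
  have h : ∀ k : ℕ, W 0 0 k = qpoch (-Xq) Xq k := by
    intro k
    rw [W_0ym]
    simp [qfact_zero, div_self (qfact_t_ne_zero k)]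
  rw [h, h, qpoch_succ]
  ring

-- Pascal, case (0, j+1, 0)
lemma W_0y0 (y : ℕ) : W 0 y 0 = 1 := by
  unfold W
  simp [qfact_zero, qpoch_zero, div_self (qfact_t_ne_zero y)]

lemma WP_F (j : ℕ) : W 0 (j+1) 0 = W 0 j 0 := by
  rw [W_0y0, W_0y0]

-- Pascal, case (c+1, 0, 0)
lemma WP_G (c : ℕ) : W (c+1) 0 0 = W c 0 0 := by
  rw [W_x00, W_x00]

/-- q-Pascal relation for `W`, uniform form. -/
lemma WP (c j m : ℕ) (hn : c + j + m ≠ 0) :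
    W c j m = Xq^(2*c) * (if j = 0 then 0 else W c (j-1) m)
      + Xq^(2*j) * (1 + Xq^m) * (if m = 0 then 0 else W c j (m-1))
      + Xq^(4*j+2*m) * (if c = 0 then 0 else W (c-1) j m) := by
  rcases c with _|c <;> rcases j with _|j <;> rcases m with _|m <;>
    simp only [if_pos rfl, if_neg (Nat.succ_ne_zero _), Nat.add_sub_cancel, if_true,
      mul_zero, add_zero, zero_add, pow_zero, mul_one, one_mul]
  · exact absurd rfl hn
  · exact WP_E m
  · exact WP_F j
  · exact WP_B j m
  · exact WP_G c
  · exact WP_C c m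
  · exact WP_D c j
  · exact WP_A c j m

/-- Master termwise recurrence at the `ℕ` level. -/
lemma master_core (c j m : ℕ) (hn : c + j + m ≠ 0) :
    W c j m = Xq^(2*c) * (if j = 0 then 0 else W c (j-1) m)
      - (Xq^(2*c+2) - 1) * (if m < 2 then 0 else W (c+1) j (m-2))
      + (1 + Xq) * Xq^(2*j+m-1) * (if m = 0 then 0 else W c j (m-1))
      + Xq^(4*j+2*m) * (if c = 0 then 0 else W (c-1) j m) := by
  rw [WP c j m hn]
  have key : Xq^(2*j) * (1 + Xq^m) * (if m = 0 then 0 else W c j (m-1))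
      = -((Xq^(2*c+2) - 1) * (if m < 2 then 0 else W (c+1) j (m-2)))
        + (1 + Xq) * Xq^(2*j+m-1) * (if m = 0 then 0 else W c j (m-1)) := by
    rcases m with _|m
    · simp
    rcases m with _|m
    · rw [if_neg (by omega : ¬(1:ℕ) = 0), if_pos (by omega : (1:ℕ) < 2),
        show 2*j+1-1 = 2*j from by omega]
      ring
    · rw [if_neg (by omega : ¬m+2 = 0), if_neg (by omega : ¬m+2 < 2),
        show (m+2)-1 = m+1 from by omega, show (m+2)-2 = m from by omega,
        show 2*j+(m+2)-1 = 2*j+m+1 from by omega,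
        show (Xq^(2*c+2) - 1 : K) = ((Xq^2)^(c+1) - 1) from by rw [← pow_mul, show 2*(c+1) = 2*c+2 from by omega], ← WE c j m]
      ring
  rw [key]
  ring

/-- The summand of the main identity, integer parameters. -/
def Tz (a b : ℤ) (c : ℕ) : K :=
  qmul3Z (Xq ^ 2) (c : ℤ) (a + c) (b - 2 * c) * Xq ^ (2 * (c : ℤ) * (a + c))
    * qpoch (-Xq) Xq (b - 2 * c).toNat

lemma Tz_zero (a b : ℤ) (c : ℕ) (h : a + (c:ℤ) < 0 ∨ b - 2*(c:ℤ) < 0) : Tz a b c = 0 := by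
  unfold Tz qmul3Z
  rw [if_neg, zero_mul, zero_mul]
  rintro ⟨h1, h2, h3⟩
  omega

lemma Tz_W (a b : ℤ) (c j m : ℕ) (hj : a + (c:ℤ) = (j:ℤ)) (hm : b - 2*(c:ℤ) = (m:ℤ)) :
    Tz a b c = W c j m := by
  unfold Tz qmul3Z W
  rw [hj, hm, if_pos ⟨Int.natCast_nonneg c, by omega, by omega⟩,
    show ((c:ℤ) + (j:ℤ) + (m:ℤ)).toNat = c + j + m from by omega,
    show ((c:ℤ)).toNat = c from rfl, show ((j:ℤ)).toNat = j from rfl,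
    show ((m:ℤ)).toNat = m from rfl,
    show (2 * (c:ℤ) * (j:ℤ)) = ((2*c*j : ℕ) : ℤ) from by push_cast; ring, zpow_natCast]

/-- Master termwise recurrence at the `ℤ` level. -/
lemma master (a b : ℤ) (hab : 1 ≤ a + b) (c : ℕ) :
    Tz a b c = Xq ^ (2*(c:ℤ)) * Tz (a-1) b c
      - (Xq ^ (2*(c:ℤ)+2) - 1) * Tz (a-1) b (c+1)
      + (Xq ^ (2*a+b-1) + Xq ^ (2*a+b)) * Tz a (b-1) c
      + Xq ^ (4*a+2*b) * (if c = 0 then 0 else Tz (a+1) (b-2) (c-1)) := by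
  have hlast_zero : ∀ (P : Prop) [Decidable P], (a + (c:ℤ) < 0 ∨ b - 2*(c:ℤ) < 0) →
      (if c = 0 then (0:K) else Tz (a+1) (b-2) (c-1)) = 0 := by
    intro P _ h
    rcases c with _|c
    · rw [if_pos rfl]
    · rw [if_neg (Nat.succ_ne_zero c), Nat.add_sub_cancel]
      refine Tz_zero _ _ _ ?_
      rcases h with h | h
      · exact Or.inl (by push_cast at h ⊢; omega)
      · exact Or.inr (by push_cast at h ⊢; omega)
  by_cases hj0 : a + (c:ℤ) < 0
  · rw [Tz_zero a b c (Or.inl hj0), Tz_zero (a-1) b c (Or.inl (by omega)),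
      Tz_zero (a-1) b (c+1) (Or.inl (by push_cast; omega)),
      Tz_zero a (b-1) c (Or.inl hj0), hlast_zero True (Or.inl hj0)]
    ring
  by_cases hm0 : b - 2*(c:ℤ) < 0
  · rw [Tz_zero a b c (Or.inr hm0), Tz_zero (a-1) b c (Or.inr hm0),
      Tz_zero (a-1) b (c+1) (Or.inr (by push_cast; omega)),
      Tz_zero a (b-1) c (Or.inr (by omega)), hlast_zero True (Or.inr hm0)]
    ring
  push_neg at hj0 hm0
  set j := (a + (c:ℤ)).toNat with hjdef
  set m := (b - 2*(c:ℤ)).toNat with hmdef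
  have hj : a + (c:ℤ) = (j:ℤ) := by omega
  have hm : b - 2*(c:ℤ) = (m:ℤ) := by omega
  have hn : c + j + m ≠ 0 := by omega
  have E0 : Tz a b c = W c j m := Tz_W a b c j m hj hm
  have E1 : Tz (a-1) b c = (if j = 0 then 0 else W c (j-1) m) := by
    rcases hJ : j with _|j'
    · rw [if_pos rfl]
      exact Tz_zero _ _ _ (Or.inl (by omega))
    · rw [if_neg (Nat.succ_ne_zero j'), Nat.add_sub_cancel]
      exact Tz_W _ _ _ _ _ (by push_cast; omega) hm
  have E2 : Tz (a-1) b (c+1) = (if m < 2 then 0 else W (c+1) j (m-2)) := by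
    by_cases hM : m < 2
    · rw [if_pos hM]
      exact Tz_zero _ _ _ (Or.inr (by push_cast; omega))
    · rw [if_neg hM]
      exact Tz_W _ _ _ _ _ (by push_cast; omega) (by push_cast; omega)
  have E3 : Tz a (b-1) c = (if m = 0 then 0 else W c j (m-1)) := by
    rcases hM : m with _|m'
    · rw [if_pos rfl]
      exact Tz_zero _ _ _ (Or.inr (by omega))
    · rw [if_neg (Nat.succ_ne_zero m'), Nat.add_sub_cancel]
      exact Tz_W _ _ _ _ _ hj (by push_cast; omega)
  have E4 : (if c = 0 then (0:K) else Tz (a+1) (b-2) (c-1))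
      = (if c = 0 then 0 else W (c-1) j m) := by
    rcases c with _|c'
    · rfl
    · rw [if_neg (Nat.succ_ne_zero c'), if_neg (Nat.succ_ne_zero c'), Nat.add_sub_cancel]
      exact Tz_W _ _ _ _ _ (by push_cast at hj ⊢; omega) (by push_cast at hm ⊢; omega)
  rw [E0, E1, E2, E3, E4,
    show Xq ^ (2*(c:ℤ)) = Xq ^ (2*c : ℕ) from by
      rw [show (2*(c:ℤ)) = ((2*c:ℕ):ℤ) from by push_cast; ring, zpow_natCast],
    show Xq ^ (2*(c:ℤ)+2) = Xq ^ (2*c+2 : ℕ) from by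
      rw [show (2*(c:ℤ)+2) = ((2*c+2:ℕ):ℤ) from by push_cast; ring, zpow_natCast],
    show Xq ^ (4*a+2*b) = Xq ^ (4*j+2*m : ℕ) from by
      rw [show (4*a+2*b) = ((4*j+2*m:ℕ):ℤ) from by push_cast; omega, zpow_natCast]]
  have C3 : (Xq^(2*a+b-1) + Xq^(2*a+b)) * (if m = 0 then (0:K) else W c j (m-1))
      = (1 + Xq) * Xq^(2*j+m-1 : ℕ) * (if m = 0 then 0 else W c j (m-1)) := by
    rcases m with _|m'
    · simp
    · rw [show (2*a+b-1 : ℤ) = ((2*j+m' : ℕ):ℤ) from by push_cast; omega,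
        show (2*a+b : ℤ) = ((2*j+m'+1 : ℕ):ℤ) from by push_cast; omega,
        zpow_natCast, zpow_natCast, show 2*j+(m'+1)-1 = 2*j+m' from by omega]
      ring
  rw [C3]
  exact master_core c j m hn

/-- The sum in the main identity. -/
def Ssum (a b : ℤ) : K := ∑ c ∈ Finset.range (b.toNat + 1), Tz a b c

lemma Tz_top (a b : ℤ) (c : ℕ) (hc : b < 2*(c:ℤ)) : Tz a b c = 0 :=
  Tz_zero _ _ _ (Or.inr (by omega))

lemma sum_Tz_eq (a b : ℤ) (N : ℕ) (hN : b.toNat + 1 ≤ N) :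
    ∑ c ∈ Finset.range N, Tz a b c = Ssum a b := by
  unfold Ssum
  symm
  apply Finset.sum_subset (Finset.range_subset_range.2 hN)
  intro c hc hcn
  rw [Finset.mem_range] at hcn
  exact Tz_top a b c (by omega)

lemma Ssum_rec (a b : ℤ) (hab : 1 ≤ a + b) :
    Ssum a b = Ssum (a-1) b + (Xq^(2*a+b-1) + Xq^(2*a+b)) * Ssum a (b-1)
      + Xq^(4*a+2*b) * Ssum (a+1) (b-2) := by
  set N := b.toNat + 2 with hNdef
  rw [← sum_Tz_eq a b N (by omega)]
  rw [Finset.sum_congr rfl (fun c _ => master a b hab c)]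
  rw [Finset.sum_add_distrib, Finset.sum_add_distrib, Finset.sum_sub_distrib]
  have pieceA : (∑ c ∈ Finset.range N, Xq ^ (2*(c:ℤ)) * Tz (a-1) b c)
      - (∑ c ∈ Finset.range N, (Xq ^ (2*(c:ℤ)+2) - 1) * Tz (a-1) b (c+1))
      = Ssum (a-1) b := by
    have hg0 : (Xq ^ (2*((0:ℕ):ℤ)) - 1) * Tz (a-1) b 0 = 0 := by
      norm_num
    have step1 : (∑ c ∈ Finset.range N, (Xq ^ (2*(c:ℤ)+2) - 1) * Tz (a-1) b (c+1))
        = ∑ c ∈ Finset.range N, (fun c' : ℕ => (Xq ^ (2*(c':ℤ)) - 1) * Tz (a-1) b c') (c+1) := by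
      refine Finset.sum_congr rfl fun c _ => ?_
      show (Xq ^ (2*(c:ℤ)+2) - 1) * Tz (a-1) b (c+1)
        = (Xq ^ (2*(((c+1):ℕ):ℤ)) - 1) * Tz (a-1) b (c+1)
      rw [show (2*(((c+1):ℕ):ℤ)) = 2*(c:ℤ)+2 from by push_cast; ring]
    have step2 := Finset.sum_range_succ' (fun c' : ℕ => (Xq ^ (2*(c':ℤ)) - 1) * Tz (a-1) b c') N
    have step3 := Finset.sum_range_succ (fun c' : ℕ => (Xq ^ (2*(c':ℤ)) - 1) * Tz (a-1) b c') N
    have hgN : (Xq ^ (2*((N:ℕ):ℤ)) - 1) * Tz (a-1) b N = 0 := by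
      rw [Tz_top (a-1) b N (by omega), mul_zero]
    rw [step1, show (∑ c ∈ Finset.range N,
        (fun c' : ℕ => (Xq ^ (2*(c':ℤ)) - 1) * Tz (a-1) b c') (c+1))
        = ∑ c ∈ Finset.range (N+1), (fun c' : ℕ => (Xq ^ (2*(c':ℤ)) - 1) * Tz (a-1) b c') c
          - (Xq ^ (2*((0:ℕ):ℤ)) - 1) * Tz (a-1) b 0 from by rw [step2]; ring,
      hg0, sub_zero, step3, hgN, add_zero, ← Finset.sum_sub_distrib]
    rw [show (∑ c ∈ Finset.range N, (Xq ^ (2*(c:ℤ)) * Tz (a-1) b c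
        - (Xq ^ (2*(c:ℤ)) - 1) * Tz (a-1) b c))
        = ∑ c ∈ Finset.range N, Tz (a-1) b c from
        Finset.sum_congr rfl fun c _ => by ring]
    exact sum_Tz_eq (a-1) b N (by omega)
  have pieceB : (∑ c ∈ Finset.range N, (Xq ^ (2*a+b-1) + Xq ^ (2*a+b)) * Tz a (b-1) c)
      = (Xq^(2*a+b-1) + Xq^(2*a+b)) * Ssum a (b-1) := by
    rw [← Finset.mul_sum, sum_Tz_eq a (b-1) N (by omega)]
  have pieceC : (∑ c ∈ Finset.range N,
        Xq ^ (4*a+2*b) * (if c = 0 then (0:K) else Tz (a+1) (b-2) (c-1)))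
      = Xq^(4*a+2*b) * Ssum (a+1) (b-2) := by
    rw [← Finset.mul_sum]
    congr 1
    have step := Finset.sum_range_succ'
      (fun c : ℕ => if c = 0 then (0:K) else Tz (a+1) (b-2) (c-1)) (b.toNat + 1)
    rw [hNdef, show b.toNat + 2 = (b.toNat + 1) + 1 from rfl, step]
    beta_reduce
    rw [if_pos rfl, add_zero,
      show (∑ c ∈ Finset.range (b.toNat+1),
        (if c + 1 = 0 then (0:K) else Tz (a+1) (b-2) (c+1-1)))
        = ∑ c ∈ Finset.range (b.toNat+1), Tz (a+1) (b-2) c from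
        Finset.sum_congr rfl fun c _ => by rw [if_neg (Nat.succ_ne_zero c), Nat.add_sub_cancel]]
    exact sum_Tz_eq (a+1) (b-2) (b.toNat+1) (by omega)
  rw [pieceA, pieceB, pieceC]

lemma qfact2_X_ne (x y : ℕ) : (qfact Xq x * qfact Xq y : K) ≠ 0 :=
  mul_ne_zero (qfact_X_ne_zero _) (qfact_X_ne_zero _)

/-- q-Pascal for the Gaussian binomial, integer arguments. -/
lemma qbinomZ_pascal (N m : ℤ) (hN : 1 ≤ N) :
    qbinomZ Xq N m = qbinomZ Xq (N-1) m + Xq^(N-m) * qbinomZ Xq (N-1) (m-1) := by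
  unfold qbinomZ
  by_cases hm0 : m < 0
  · rw [if_neg (by rintro ⟨h,-⟩; omega), if_neg (by rintro ⟨h,-⟩; omega),
      if_neg (by rintro ⟨h,-⟩; omega)]
    ring
  by_cases hmN : N < m
  · rw [if_neg (by rintro ⟨-,h⟩; omega), if_neg (by rintro ⟨-,h⟩; omega),
      if_neg (by rintro ⟨-,h⟩; omega)]
    ring
  by_cases hm00 : m = 0
  · subst hm00
    rw [if_pos ⟨le_refl 0, by omega⟩, if_pos ⟨le_refl 0, by omega⟩,
      if_neg (by rintro ⟨h,-⟩; omega), mul_zero, add_zero,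
      show ((0:ℤ)).toNat = 0 from rfl, qfact_zero, one_mul, one_mul,
      show (N - 0 : ℤ) = N from by ring, show (N - 1 - 0 : ℤ) = N - 1 from by ring,
      div_self (qfact_X_ne_zero _), div_self (qfact_X_ne_zero _)]
  by_cases hmN2 : m = N
  · subst hmN2
    rw [if_pos ⟨by omega, le_refl m⟩, if_neg (by rintro ⟨-,h⟩; omega),
      if_pos ⟨by omega, by omega⟩, zero_add,
      show (m - m : ℤ) = 0 from by ring, show (m - 1 - (m - 1) : ℤ) = 0 from by ring,
      show ((0:ℤ)).toNat = 0 from rfl, qfact_zero, mul_one, mul_one, zpow_zero, one_mul,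
      div_self (qfact_X_ne_zero _), div_self (qfact_X_ne_zero _)]
  -- generic case: 1 ≤ m ≤ N-1
  obtain ⟨μ, hμ⟩ : ∃ μ:ℕ, m = (μ:ℤ)+1 := ⟨(m-1).toNat, by omega⟩
  obtain ⟨k, hk⟩ : ∃ k:ℕ, N-m = (k:ℤ)+1 := ⟨(N-m-1).toNat, by omega⟩
  rw [if_pos ⟨by omega, by omega⟩, if_pos ⟨by omega, by omega⟩, if_pos ⟨by omega, by omega⟩,
    show N.toNat = μ+k+2 from by omega, show m.toNat = μ+1 from by omega,
    show (N-m).toNat = k+1 from by omega, show (N-1).toNat = μ+k+1 from by omega,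
    show (N-1-m).toNat = k from by omega, show (m-1).toNat = μ from by omega,
    show (N-1-(m-1)).toNat = k+1 from by omega,
    show Xq^(N-m) = Xq^(k+1:ℕ) from by rw [show N-m = ((k+1:ℕ):ℤ) from by omega, zpow_natCast]]
  -- now a pure ℕ identity
  have e1 : (qfact Xq (μ+k+1) / (qfact Xq (μ+1) * qfact Xq k) : K)
      = qfact Xq (μ+k+1) * (Xq^(k+1) - 1) / (qfact Xq (μ+1) * qfact Xq (k+1)) := by
    rw [div_eq_div_iff (qfact2_X_ne _ _) (qfact2_X_ne _ _)]
    simp only [qfact_succ]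
    ring
  have e2 : (Xq^(k+1) * (qfact Xq (μ+k+1) / (qfact Xq μ * qfact Xq (k+1))) : K)
      = Xq^(k+1) * qfact Xq (μ+k+1) * (Xq^(μ+1) - 1) / (qfact Xq (μ+1) * qfact Xq (k+1)) := by
    rw [mul_div_assoc', div_eq_div_iff (qfact2_X_ne _ _) (qfact2_X_ne _ _)]
    simp only [qfact_succ]
    ring
  rw [e1, e2, ← add_div]
  congr 1
  rw [show μ+k+2 = (μ+k+1)+1 from rfl, qfact_succ]
  ring

/-- Two-step q-Pascal. -/
lemma qbinomZ_pascal2 (N m : ℤ) (hN : 2 ≤ N) :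
    qbinomZ Xq N m = qbinomZ Xq (N-2) m
      + (Xq^(N-m-1) + Xq^(N-m)) * qbinomZ Xq (N-2) (m-1)
      + Xq^(2*N-2*m) * qbinomZ Xq (N-2) (m-2) := by
  rw [qbinomZ_pascal N m (by omega), qbinomZ_pascal (N-1) m (by omega),
    qbinomZ_pascal (N-1) (m-1) (by omega),
    show N-1-1 = N-2 from by ring, show N-1-m = N-m-1 from by ring,
    show N-1-(m-1) = N-m from by ring, show m-1-1 = m-2 from by ring]
  rw [mul_add, ← mul_assoc, show (Xq^(N-m) * Xq^(N-m) : K) = Xq^(2*N-2*m) from by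
    rw [← zpow_add₀ Xq_ne_zero]; congr 1; ring]
  ring

lemma main_ind : ∀ n : ℕ, ∀ a b : ℤ, a + b = (n:ℤ) → Ssum a b = qbinomZ Xq (2*(a+b)) b := by
  intro n
  induction n with
  | zero =>
    intro a b h
    norm_num at h
    by_cases hb : b < 0
    · rw [show (2*(a+b) : ℤ) = 0 from by omega]
      unfold Ssum
      rw [show b.toNat = 0 from by omega, Finset.sum_range_one,
        Tz_zero a b 0 (Or.inr (by push_cast; omega)),
        qbinomZ, if_neg (by rintro ⟨h1,-⟩; omega)]
    by_cases hb0 : b = 0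
    · subst hb0
      have ha : a = 0 := by omega
      subst ha
      unfold Ssum
      rw [show ((0:ℤ)).toNat = 0 from rfl, Finset.sum_range_one,
        Tz_W 0 0 0 0 0 (by norm_num) (by norm_num), W_x00]
      unfold qbinomZ
      norm_num [qfact_zero]
    · rw [show (2*(a+b) : ℤ) = 0 from by omega]
      unfold Ssum
      rw [Finset.sum_eq_zero, qbinomZ, if_neg (by rintro ⟨-,h2⟩; omega)]
      intro c _
      by_cases hc : a + (c:ℤ) < 0
      · exact Tz_zero a b c (Or.inl hc)
      · exact Tz_zero a b c (Or.inr (by omega))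
  | succ n ih =>
    intro a b h
    have hab : 1 ≤ a + b := by omega
    rw [Ssum_rec a b hab, ih (a-1) b (by omega), ih a (b-1) (by omega),
      ih (a+1) (b-2) (by omega),
      show (2*((a-1)+b) : ℤ) = 2*(a+b)-2 from by ring,
      show (2*(a+(b-1)) : ℤ) = 2*(a+b)-2 from by ring,
      show (2*((a+1)+(b-2)) : ℤ) = 2*(a+b)-2 from by ring,
      qbinomZ_pascal2 (2*(a+b)) b (by omega),
      show (2*(a+b)-b-1 : ℤ) = 2*a+b-1 from by ring,
      show (2*(a+b)-b : ℤ) = 2*a+b from by ring,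
      show (2*(2*(a+b))-2*b : ℤ) = 4*a+2*b from by ring]

/-- For integers `a, b` with `a + b ≥ 0`,
`Σ_{c ≥ 0} [a+b choose c, a+c, b−2c]_{λ²} · λ^{2c(a+c)} · (−λ; λ)_{b−2c}
  = [2(a+b) choose b]_λ` in `ℚ(λ)`.  (The sum is finite: all terms with `2c > b`
vanish, so summing over `0 ≤ c ≤ b` captures every nonzero term.) -/
theorem stmt4 (a b : ℤ) (hab : 0 ≤ a + b) :
    ∑ c ∈ Finset.range (b.toNat + 1),
      qmul3Z (Xq ^ 2) (c : ℤ) (a + c) (b - 2 * c) * Xq ^ (2 * (c : ℤ) * (a + c))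
        * qpoch (-Xq) Xq (b - 2 * c).toNat
    = qbinomZ Xq (2 * (a + b)) b := by
  show Ssum a b = qbinomZ Xq (2*(a+b)) b
  exact main_ind (a+b).toNat a b (by omega)
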